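/- Let H be a marked hypergraph with |V(H)∖M(H)| ≥ 2, and for each x ∈ V(H)∖M(H) let 𝒳_x be an arbitrary collection of dangers at x in H. If H is a Breaker win, then I_{H^{+x}}(𝒳_x) ≠ ∅ for every x ∈ V(H)∖M(H). -/
import Mathlib


namespace MB

/-- A marked hypergraph: a finite vertex set, an edge set of finite subsets of vertices,
and a set of marked vertices. -/
structure MarkedHypergraph (V : Type) where
  verts : Finset V
  edges : Finset (Finset V)
  marked : Finset V

namespace MarkedHypergraph

variable {V : Type} [DecidableEq V]

/-- The structural requirements on a marked hypergraph: nonempty vertex set, edges are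
nonempty subsets of the vertex set, marked vertices are vertices. -/
def IsValid (H : MarkedHypergraph V) : Prop :=
  H.verts.Nonempty ∧ (∀ e ∈ H.edges, e ⊆ H.verts ∧ e.Nonempty) ∧ H.marked ⊆ H.verts

/-- `k`-uniformity: every edge has exactly `k` vertices. -/
def IsUniform (H : MarkedHypergraph V) (k : ℕ) : Prop :=
  ∀ e ∈ H.edges, e.card = k

/-- `H^{+x}`: mark the vertex `x`. -/
def plus (H : MarkedHypergraph V) (x : V) : MarkedHypergraph V :=
  ⟨H.verts, H.edges, insert x H.marked⟩

/-- `H^{-y}`: remove the vertex `y` and all edges containing it. -/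
def minus (H : MarkedHypergraph V) (y : V) : MarkedHypergraph V :=
  ⟨H.verts.erase y, H.edges.filter fun e => y ∉ e, H.marked.erase y⟩

/-- `X` is a subhypergraph of `H`. -/
def IsSub (X H : MarkedHypergraph V) : Prop :=
  X.verts ⊆ H.verts ∧ X.edges ⊆ H.edges ∧ X.marked = X.verts ∩ H.marked

/-- A trivial Maker win: some edge has at most one non-marked vertex. -/
def TrivialMakerWin (H : MarkedHypergraph V) : Prop :=
  ∃ e ∈ H.edges, (e \ H.marked).card ≤ 1

theorem card_free_lt (H : MarkedHypergraph V) (x y : V)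
    (hy : y ∈ (H.plus x).verts \ (H.plus x).marked) :
    (((H.plus x).minus y).verts \ ((H.plus x).minus y).marked).card
      < (H.verts \ H.marked).card := by
  have hy' : y ∈ H.verts \ insert x H.marked := hy
  rw [Finset.mem_sdiff] at hy'
  have hyv : y ∈ H.verts := hy'.1
  have hym : y ∉ H.marked := fun h => hy'.2 (Finset.mem_insert_of_mem h)
  show (H.verts.erase y \ (insert x H.marked).erase y).card < (H.verts \ H.marked).card
  calc (H.verts.erase y \ (insert x H.marked).erase y).card
      ≤ ((H.verts \ H.marked).erase y).card := by
        apply Finset.card_le_card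
        intro v hv
        rw [Finset.mem_sdiff, Finset.mem_erase] at hv
        rw [Finset.mem_erase, Finset.mem_sdiff]
        exact ⟨hv.1.1, hv.1.2, fun hvm =>
          hv.2 (Finset.mem_erase.mpr ⟨hv.1.1, Finset.mem_insert_of_mem hvm⟩)⟩
    _ < (H.verts \ H.marked).card :=
        Finset.card_erase_lt_of_mem (Finset.mem_sdiff.mpr ⟨hyv, hym⟩)

/-- Maker win, defined by recursion on the number of non-marked vertices:
if at most one non-marked vertex remains, Maker wins iff the position is a trivial Maker
win; otherwise Maker wins iff he has a pick `x` such that for every answer `y` of Breaker,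
the resulting position is a Maker win. -/
def MakerWin (H : MarkedHypergraph V) : Prop :=
  if (H.verts \ H.marked).card ≤ 1 then TrivialMakerWin H
  else ∃ x ∈ H.verts \ H.marked,
    ∀ y ∈ (H.plus x).verts \ (H.plus x).marked, MakerWin ((H.plus x).minus y)
termination_by (H.verts \ H.marked).card
decreasing_by exact card_free_lt H _ _ (by assumption)

/-- Breaker win: not a Maker win. -/
def BreakerWin (H : MarkedHypergraph V) : Prop := ¬ H.MakerWin

open Classical in
/-- `τ_M(H)`: the minimum number of rounds Maker needs to claim a fully marked edge
(`⊤` if Breaker wins). -/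
noncomputable def tauM (H : MarkedHypergraph V) : ℕ∞ :=
  if TrivialMakerWin H then H.edges.inf fun e => ((e \ H.marked).card : ℕ∞)
  else if (H.verts \ H.marked).card ≤ 1 then (⊤ : ℕ∞)
  else 1 + (H.verts \ H.marked).inf fun x =>
    ((H.plus x).verts \ (H.plus x).marked).attach.sup fun y =>
      tauM ((H.plus x).minus y.1)
termination_by (H.verts \ H.marked).card
decreasing_by exact card_free_lt H _ _ y.2

end MarkedHypergraph

open MarkedHypergraph

variable {V : Type} [DecidableEq V]

/-- The intersection `I_H(𝒳)` of a collection `𝒳` of marked hypergraphs in `H`. -/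
def inter (H : MarkedHypergraph V) (𝒳 : Set (MarkedHypergraph V)) : Set V :=
  {y | y ∈ H.verts ∧ y ∉ H.marked ∧ ∀ X ∈ 𝒳, y ∈ X.verts}

/-- The union of a finite collection of marked hypergraphs. -/
def unionOf (O : Finset (MarkedHypergraph V)) : MarkedHypergraph V :=
  ⟨O.sup MarkedHypergraph.verts, O.sup MarkedHypergraph.edges, O.sup MarkedHypergraph.marked⟩

/-- Isomorphism of pointed marked hypergraphs. -/
def PointedIso (X : MarkedHypergraph V) (x : V) (Y : MarkedHypergraph V) (y : V) : Prop :=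
  ∃ φ : V → V, Set.InjOn φ ↑X.verts ∧ X.verts.image φ = Y.verts ∧
    (∀ e : Finset V, e ⊆ X.verts → (e ∈ X.edges ↔ e.image φ ∈ Y.edges)) ∧
    (∀ v ∈ X.verts, (v ∈ X.marked ↔ φ v ∈ Y.marked)) ∧ φ x = y

/-- `(D,x)` is a danger: `x` is a non-marked vertex and `D^{+x}` is a Maker win. -/
def IsDanger (D : MarkedHypergraph V) (x : V) : Prop :=
  x ∈ D.verts ∧ x ∉ D.marked ∧ (D.plus x).MakerWin

/-- A family of dangers: a set of pointed marked hypergraphs, all of which are dangers. -/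
def IsDangerFamily (F : Set (MarkedHypergraph V × V)) : Prop :=
  ∀ p ∈ F, IsDanger p.1 p.2

/-- The collection of all dangers at `x` in `H`: subhypergraphs `D` of `H` containing `x`
such that `D^{+x}` is a Maker win. -/
def dangersAt (H : MarkedHypergraph V) (x : V) : Set (MarkedHypergraph V) :=
  {D | D.IsValid ∧ D.IsSub H ∧ x ∈ D.verts ∧ (D.plus x).MakerWin}

/-- `xℱ(H)`: the collection of subhypergraphs `X` of `H` containing `x` such that `(X,x)`
is isomorphic to a member of the family `F`. -/
def xFam (F : Set (MarkedHypergraph V × V)) (H : MarkedHypergraph V) (x : V) :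
    Set (MarkedHypergraph V) :=
  {X | X.IsValid ∧ X.IsSub H ∧ x ∈ X.verts ∧ ∃ p ∈ F, PointedIso X x p.1 p.2}

/-- `J F r H` is the property `J_r(ℱ,H)` (for `r ≥ 1`; `J F 0 H` is `True` by convention). -/
def J (F : Set (MarkedHypergraph V × V)) : ℕ → MarkedHypergraph V → Prop
  | 0, _ => True
  | r + 1, H => ∀ x ∈ H.verts \ H.marked,
      ∃ y ∈ inter (H.plus x) (xFam F H x), J F r ((H.plus x).minus y)

/-- `P` is an `ab`-path (in a 3-uniform setting) of length `L`. -/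
def IsPathLen (P : MarkedHypergraph V) (a b : V) (L : ℕ) : Prop :=
  (L = 0 ∧ a = b ∧ P.verts = {a} ∧ P.edges = ∅) ∨
  (1 ≤ L ∧ a ≠ b ∧ ∃ e : ℕ → Finset V,
    P.edges = (Finset.range L).image e ∧
    P.verts = (Finset.range L).biUnion e ∧
    (∀ i, i < L → (e i).card = 3) ∧
    (∀ i j, i < L → j < L → i ≠ j → e i ≠ e j) ∧
    a ∈ e 0 ∧ b ∈ e (L - 1) ∧
    (∀ i, i + 1 < L → (e i ∩ e (i + 1)).card = 1) ∧
    (∀ i j, i + 2 ≤ j → j < L → e i ∩ e j = ∅) ∧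
    (∀ i, 1 ≤ i → i < L → a ∉ e i) ∧
    (∀ i, i + 1 < L → b ∉ e i))

/-- `P` is an `ab`-path. -/
def IsPath (P : MarkedHypergraph V) (a b : V) : Prop := ∃ L, IsPathLen P a b L

/-- `C` is an `a`-cycle of length `L`. -/
def IsCycleLen (C : MarkedHypergraph V) (a : V) (L : ℕ) : Prop :=
  2 ≤ L ∧ ∃ e : ℕ → Finset V,
    C.edges = (Finset.range L).image e ∧
    C.verts = (Finset.range L).biUnion e ∧
    (∀ i, i < L → (e i).card = 3) ∧
    (∀ i j, i < L → j < L → i ≠ j → e i ≠ e j) ∧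
    a ∈ e 0 ∧ a ∈ e (L - 1) ∧
    (∀ i, 0 < i → i + 1 < L → a ∉ e i) ∧
    (L = 2 → (e 0 ∩ e 1).card = 2) ∧
    (3 ≤ L → (e 0 ∩ e (L - 1) = {a} ∧ ∀ i, i + 1 < L → (e i ∩ e (i + 1)).card = 1)) ∧
    (∀ i j, i < j → j < L → 2 ≤ j - i → j - i ≤ L - 2 → e i ∩ e j = ∅)

/-- `C` is an `a`-cycle. -/
def IsCycle (C : MarkedHypergraph V) (a : V) : Prop := ∃ L, IsCycleLen C a L

/-- `T` is an `a`-tadpole: the union of an `ab`-path and a `b`-cycle meeting only at `b`. -/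
def IsTadpole (T : MarkedHypergraph V) (a : V) : Prop :=
  ∃ b P C, IsPath P a b ∧ IsCycle C b ∧ P.verts ∩ C.verts = {b} ∧
    T.verts = P.verts ∪ C.verts ∧ T.edges = P.edges ∪ C.edges

/-- `S` is an `x`-snake: an `xm`-path of positive length with `m` marked. -/
def IsSnake (S : MarkedHypergraph V) (x : V) : Prop :=
  ∃ m L, 1 ≤ L ∧ IsPathLen S x m L ∧ m ∈ S.marked

/-- `N` is a nunchaku: an `ab`-path of positive length with marked set exactly `{a,b}`. -/
def IsNunchaku (N : MarkedHypergraph V) : Prop :=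
  ∃ a b L, 1 ≤ L ∧ IsPathLen N a b L ∧ N.marked = {a, b}

/-- `C` is an `a`-necklace: an `a`-cycle with marked set exactly `{a}`. -/
def IsNecklace (C : MarkedHypergraph V) (a : V) : Prop :=
  ∃ L, IsCycleLen C a L ∧ C.marked = {a}

/-- The family `𝒮` of pointed snakes with exactly one marked vertex. -/
def famS : Set (MarkedHypergraph V × V) := {p | IsSnake p.1 p.2 ∧ p.1.marked.card = 1}

/-- The family `𝒞` of pointed cycles with no marked vertex. -/
def famC : Set (MarkedHypergraph V × V) := {p | IsCycle p.1 p.2 ∧ p.1.marked = ∅}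

/-- The family `𝒯` of pointed tadpoles with no marked vertex. -/
def famT : Set (MarkedHypergraph V × V) := {p | IsTadpole p.1 p.2 ∧ p.1.marked = ∅}

/-- `𝒟₀ = 𝒮 ∪ 𝒞`. -/
def famD0 : Set (MarkedHypergraph V × V) := famS ∪ famC

/-- `𝒟₁ = 𝒮 ∪ 𝒯`. -/
def famD1 : Set (MarkedHypergraph V × V) := famS ∪ famT

/-- `obs(ℱ)`: pointed marked hypergraphs `(D,x)` which, for some `ℱ`-dangerous vertex `z`,
are the union of a collection `𝒪` of subhypergraphs, each of which is (or becomes, once `x`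
is marked) an `ℱ`-danger at `z`, with `I_{D^{+x+z}}(𝒪) = ∅`. -/
def obs (F : Set (MarkedHypergraph V × V)) : Set (MarkedHypergraph V × V) :=
  {p | p.2 ∈ p.1.verts ∧ p.2 ∉ p.1.marked ∧
    ∃ z, z ∈ p.1.verts ∧ z ∉ p.1.marked ∧ z ≠ p.2 ∧
      ∃ O : Set (MarkedHypergraph V),
        (∀ X ∈ O, X.IsValid ∧ X.IsSub p.1) ∧
        (∀ X ∈ O, p.2 ∈ X.verts → X.plus p.2 ∈ xFam F (p.1.plus p.2) z) ∧
        (∀ X ∈ O, p.2 ∉ X.verts → X ∈ xFam F p.1 z) ∧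
        (∀ v ∈ p.1.verts, ∃ X ∈ O, v ∈ X.verts) ∧
        (∀ e ∈ p.1.edges, ∃ X ∈ O, e ∈ X.edges) ∧
        (∀ m ∈ p.1.marked, ∃ X ∈ O, m ∈ X.marked) ∧
        inter ((p.1.plus p.2).plus z) O = ∅}

/-- `obsr(ℱ)`: the members `(D,x)` of `obs(ℱ)` such that `D` contains no `ℱ`-danger at `x`. -/
def obsr (F : Set (MarkedHypergraph V × V)) : Set (MarkedHypergraph V × V) :=
  {p | p ∈ obs F ∧ xFam F p.1 p.2 = ∅}

/-- `ℱ^{*r}`. -/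
def star (F : Set (MarkedHypergraph V × V)) : ℕ → Set (MarkedHypergraph V × V)
  | 0 => F
  | r + 1 => F ∪ obs (star F r)

/-- `𝒟₂ = 𝒟₁ ∪ obsr(𝒟₁)`. -/
def famD2 : Set (MarkedHypergraph V × V) := famD1 ∪ obsr famD1

/-- The lengths of nunchakus contained in `H`. -/
def nunchakuLengths (H : MarkedHypergraph V) : Set ℕ :=
  {L | 1 ≤ L ∧ ∃ N a b, N.IsSub H ∧ IsPathLen N a b L ∧ N.marked = {a, b}}

/-- `H` contains a fully marked edge, a nunchaku, or a necklace. -/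
def WinPattern (H : MarkedHypergraph V) : Prop :=
  (∃ e ∈ H.edges, e ⊆ H.marked) ∨ (∃ N, N.IsSub H ∧ IsNunchaku N) ∨
    (∃ C a, C.IsSub H ∧ IsNecklace C a)

/-- `Wk k H`: Maker can force that after `k` rounds of play the updated marked hypergraph
contains a fully marked edge, a nunchaku or a necklace. -/
def Wk : ℕ → MarkedHypergraph V → Prop
  | 0, H => WinPattern H
  | k + 1, H => ∃ x ∈ H.verts \ H.marked,
      ∀ y ∈ (H.plus x).verts \ (H.plus x).marked, Wk k ((H.plus x).minus y)

end MB
namespace MBAux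
open MB MB.MarkedHypergraph

variable {V : Type} [DecidableEq V]

theorem makerWin_of_edge : ∀ n (H : MB.MarkedHypergraph V),
    (H.verts \ H.marked).card = n →
    (∃ e ∈ H.edges, e ⊆ H.verts ∧ (e \ H.marked).card ≤ 1) → H.MakerWin := by
  intro n
  induction n using Nat.strong_induction_on with
  | _ n ih =>
  rintro H hn ⟨e, he, hev, hec⟩
  rw [MakerWin]
  split_ifs with hc
  · exact ⟨e, he, hec⟩
  · push_neg at hc
    obtain ⟨x, hx, hex⟩ : ∃ x ∈ H.verts \ H.marked, e ⊆ insert x H.marked := by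
      rcases Finset.eq_empty_or_nonempty (e \ H.marked) with h0 | ⟨x, hxe⟩
      · obtain ⟨x, hx⟩ := Finset.card_pos.mp (show 0 < (H.verts \ H.marked).card by omega)
        refine ⟨x, hx, fun v hv => Finset.mem_insert_of_mem ?_⟩
        by_contra hvm
        exact absurd h0 (Finset.nonempty_iff_ne_empty.mp ⟨v, Finset.mem_sdiff.mpr ⟨hv, hvm⟩⟩)
      · obtain ⟨hxe1, hxe2⟩ := Finset.mem_sdiff.mp hxe
        refine ⟨x, Finset.mem_sdiff.mpr ⟨hev hxe1, hxe2⟩, fun v hv => ?_⟩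
        by_cases hvm : v ∈ H.marked
        · exact Finset.mem_insert_of_mem hvm
        · have hv' : v = x :=
            Finset.card_le_one.mp hec _ (Finset.mem_sdiff.mpr ⟨hv, hvm⟩) _ hxe
          simp [hv']
    refine ⟨x, hx, fun y hy => ?_⟩
    have hy' : y ∈ H.verts ∧ y ∉ insert x H.marked := Finset.mem_sdiff.mp hy
    have hye : y ∉ e := fun h => hy'.2 (hex h)
    refine ih _ (hn ▸ card_free_lt H x y hy) _ rfl ⟨e, ?_, ?_, ?_⟩
    · exact Finset.mem_filter.mpr ⟨he, hye⟩
    · intro v hv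
      exact Finset.mem_erase.mpr ⟨fun h => hye (h ▸ hv), hev hv⟩
    · have : e \ (insert x H.marked).erase y = ∅ := by
        apply Finset.eq_empty_of_forall_notMem
        intro v hv
        obtain ⟨hv1, hv2⟩ := Finset.mem_sdiff.mp hv
        exact hv2 (Finset.mem_erase.mpr ⟨fun h => hye (h ▸ hv1), hex hv1⟩)
      simp [minus, plus, this]
theorem makerWin_mono : ∀ n (H X : MB.MarkedHypergraph V),
    (H.verts \ H.marked).card = n → X.IsSub H →
    (∀ e ∈ X.edges, e ⊆ X.verts) → X.MakerWin → H.MakerWin := by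
  intro n
  induction n using Nat.strong_induction_on with
  | _ n ih =>
  rintro H X hn ⟨hV, hEsub, hM⟩ hE hX
  have hMsub : X.marked ⊆ H.marked := by rw [hM]; exact Finset.inter_subset_right
  have hfsub : X.verts \ X.marked ⊆ H.verts \ H.marked := by
    intro v hv
    obtain ⟨hv1, hv2⟩ := Finset.mem_sdiff.mp hv
    refine Finset.mem_sdiff.mpr ⟨hV hv1, fun h => hv2 ?_⟩
    rw [hM]; exact Finset.mem_inter.mpr ⟨hv1, h⟩
  by_cases hc : (X.verts \ X.marked).card ≤ 1
  · rw [MakerWin, if_pos hc] at hX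
    obtain ⟨e, he, hec⟩ := hX
    refine makerWin_of_edge _ H rfl ⟨e, hEsub he, fun v hv => hV (hE e he hv), ?_⟩
    refine le_trans (Finset.card_le_card fun v hv => ?_) hec
    obtain ⟨hv1, hv2⟩ := Finset.mem_sdiff.mp hv
    exact Finset.mem_sdiff.mpr ⟨hv1, fun h => hv2 (hMsub h)⟩
  · have hcH : ¬ (H.verts \ H.marked).card ≤ 1 := fun h =>
      hc (le_trans (Finset.card_le_card hfsub) h)
    rw [MakerWin, if_neg hc] at hX
    obtain ⟨x, hxX, hstrat⟩ := hX
    rw [MakerWin, if_neg hcH]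
    refine ⟨x, hfsub hxX, fun y hy => ?_⟩
    have hy' : y ∈ H.verts ∧ y ∉ insert x H.marked := Finset.mem_sdiff.mp hy
    -- choose y'
    have hfree : (X.verts \ insert x X.marked).Nonempty := by
      have : x ∈ X.verts \ X.marked := hxX
      have h1 : (X.verts \ insert x X.marked) = (X.verts \ X.marked).erase x := by
        ext v
        simp only [Finset.mem_sdiff, Finset.mem_insert, Finset.mem_erase, not_or]
        tauto
      rw [h1]
      have := Finset.card_erase_of_mem this
      rw [← Finset.card_pos, this]
      omega
    obtain ⟨y', hy'X, hkey⟩ : ∃ y' ∈ X.verts \ insert x X.marked, (y ∈ X.verts → y = y') := by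
      by_cases hyX : y ∈ X.verts
      · refine ⟨y, Finset.mem_sdiff.mpr ⟨hyX, fun h => ?_⟩, fun _ => rfl⟩
        rcases Finset.mem_insert.mp h with h | h
        · exact hy'.2 (h ▸ Finset.mem_insert_self x H.marked)
        · exact hy'.2 (Finset.mem_insert_of_mem (hMsub h))
      · obtain ⟨y', hy'⟩ := hfree
        exact ⟨y', hy', fun h => absurd h hyX⟩
    obtain ⟨hy'1, hy'2⟩ := Finset.mem_sdiff.mp hy'X
    have hwin : ((X.plus x).minus y').MakerWin := hstrat y' hy'X
    have hne : ∀ v ∈ X.verts, v ≠ y' → v ≠ y := by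
      intro v hv hvy' hvy
      exact hvy' ((hkey (hvy ▸ hv)) ▸ hvy)
    refine ih _ (hn ▸ card_free_lt H x y hy) _ ((X.plus x).minus y') rfl ⟨?_, ?_, ?_⟩ ?_ hwin
    · intro v hv
      obtain ⟨hv1, hv2⟩ := Finset.mem_erase.mp hv
      exact Finset.mem_erase.mpr ⟨hne v hv2 hv1, hV hv2⟩
    · intro e hef
      obtain ⟨he, hye⟩ := Finset.mem_filter.mp hef
      refine Finset.mem_filter.mpr ⟨hEsub he, fun h => ?_⟩
      exact hne y (hE e he h) (fun hyy => hye (hyy ▸ h)) rfl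
    · show (insert x X.marked).erase y' =
        (X.verts.erase y') ∩ ((insert x H.marked).erase y)
      ext v
      simp only [Finset.mem_erase, Finset.mem_insert, Finset.mem_inter]
      constructor
      · rintro ⟨hvy', hv⟩
        have hvX : v ∈ X.verts := by
          rcases hv with h | h
          · exact h ▸ (Finset.mem_sdiff.mp hxX).1
          · exact Finset.mem_of_mem_inter_left (hM ▸ h)
        exact ⟨⟨hvy', hvX⟩, hne v hvX hvy', by
          rcases hv with h | h
          · exact Or.inl h
          · exact Or.inr (hMsub h)⟩
      · rintro ⟨⟨hvy', hvX⟩, hvy, hv⟩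
        refine ⟨hvy', ?_⟩
        rcases hv with h | h
        · exact Or.inl h
        · exact Or.inr (hM ▸ Finset.mem_inter.mpr ⟨hvX, h⟩)
    · intro e hef v hv
      obtain ⟨he, hye⟩ := Finset.mem_filter.mp hef
      exact Finset.mem_erase.mpr ⟨fun h => hye (h ▸ hv), hE e he hv⟩

end MBAux

/-- Corollary 1.17: if Breaker wins then any collections of dangers intersect. -/
theorem statement10 {V : Type} [DecidableEq V] (H : MB.MarkedHypergraph V)
    (hval : H.IsValid) (hcard : 2 ≤ (H.verts \ H.marked).card)
    (𝒳 : V → Set (MB.MarkedHypergraph V))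
    (h𝒳 : ∀ x ∈ H.verts \ H.marked, ∀ D ∈ 𝒳 x, D ∈ MB.dangersAt H x)
    (hB : H.BreakerWin) :
    ∀ x ∈ H.verts \ H.marked, (MB.inter (H.plus x) (𝒳 x)).Nonempty := by
  intro x hx
  rw [MB.MarkedHypergraph.BreakerWin, MB.MarkedHypergraph.MakerWin,
    if_neg (by omega : ¬ (H.verts \ H.marked).card ≤ 1)] at hB
  push_neg at hB
  obtain ⟨y, hy, hnw⟩ := hB x hx
  have hy' : y ∈ H.verts ∧ y ∉ insert x H.marked := Finset.mem_sdiff.mp hy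
  refine ⟨y, hy'.1, hy'.2, ?_⟩
  intro X hX
  by_contra hyX
  obtain ⟨hvalD, hsubD, hxD, hMW⟩ := h𝒳 x hx X hX
  obtain ⟨hV, hEsub, hM⟩ := hsubD
  obtain ⟨-, hEcond, -⟩ := hvalD
  apply hnw
  refine MBAux.makerWin_mono _ _ (X.plus x) rfl ⟨?_, ?_, ?_⟩ ?_ hMW
  · intro v hv
    exact Finset.mem_erase.mpr ⟨fun h => hyX (h ▸ hv), hV hv⟩
  · intro e he
    exact Finset.mem_filter.mpr ⟨hEsub he, fun h => hyX ((hEcond e he).1 h)⟩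
  · show insert x X.marked = X.verts ∩ ((insert x H.marked).erase y)
    ext v
    simp only [Finset.mem_insert, Finset.mem_inter, Finset.mem_erase]
    constructor
    · rintro (h | h)
      · exact ⟨h ▸ hxD, fun hvy => hyX ((hvy ▸ h) ▸ hxD), Or.inl h⟩
      · have hvX : v ∈ X.verts := Finset.mem_of_mem_inter_left (hM ▸ h)
        exact ⟨hvX, fun hvy => hyX (hvy ▸ hvX),
          Or.inr (Finset.mem_of_mem_inter_right (hM ▸ h))⟩
    · rintro ⟨hvX, hvy, h | h⟩
      · exact Or.inl h
      · exact Or.inr (hM ▸ Finset.mem_inter.mpr ⟨hvX, h⟩)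
  · intro e he v hv
    exact (hEcond e he).1 hv
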